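/- arXiv:1611.06469 — 4 statements merged into one kernel-verified Lean document; each statement's English description precedes it below -/
import Mathlib

section
/- Let ε>0 and set ε₁ = 3ε + 2(2ε)^{1/2}(1+ε)^{1/2}. Let H₀, H₁ be orthogonal closed subspaces of a Hilbert space with H = H₀ ⊕ H₁. Suppose (f_j)_{j∈J} ⊂ H is a Bessel sequence with bound 1+ε and (P_{H₁}f_j)_{j∈J} has lower frame bound 1−ε on H₁, and suppose there exists a family (h_i)_{i∈I} ⊂ H such that (h_i)_{i∈I} ∪ (f_j)_{j∈J} is a (1+ε)-tight frame for H. Then (P_{H₀}h_i)_{i∈I} ∪ (f_j)_{j∈J} is a frame for H with lower frame bound 1−ε₁ and upper frame bound 1+ε₁. -/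
open scoped InnerProductSpace

private lemma aux_summable_add {K : Type*} {p q : K → ℂ}
    (hp : Summable fun k => ‖p k‖ ^ 2) (hq : Summable fun k => ‖q k‖ ^ 2) :
    Summable fun k => ‖p k + q k‖ ^ 2 := by
  apply Summable.of_nonneg_of_le (fun k => by positivity) (fun k => ?_) ((hp.add hq).mul_left 2)
  nlinarith [norm_add_le (p k) (q k), sq_nonneg (‖p k‖ - ‖q k‖), norm_nonneg (p k),
    norm_nonneg (q k), norm_nonneg (p k + q k)]

private lemma aux_summable_sub {K : Type*} {p q : K → ℂ}
    (hp : Summable fun k => ‖p k‖ ^ 2) (hq : Summable fun k => ‖q k‖ ^ 2) :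
    Summable fun k => ‖p k - q k‖ ^ 2 := by
  have h := aux_summable_add (p := p) (q := fun k => -q k) hp (by simpa using hq)
  simpa [sub_eq_add_neg] using h

private lemma complex_norm_add_sq (z w : ℂ) (t : ℝ) :
    ‖z + (t : ℂ) * w‖ ^ 2 = ‖z‖ ^ 2 + t ^ 2 * ‖w‖ ^ 2 + 2 * t * ((starRingEnd ℂ) z * w).re := by
  have h : ∀ u : ℂ, ‖u‖ ^ 2 = u.re * u.re + u.im * u.im := fun u => by
    rw [← Complex.normSq_eq_norm_sq, Complex.normSq_apply]
  simp only [h, Complex.add_re, Complex.add_im, Complex.mul_re, Complex.mul_im,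
    Complex.ofReal_re, Complex.ofReal_im, Complex.conj_re, Complex.conj_im]
  ring

private lemma complex_parallelogram (z w : ℂ) :
    ‖z + w‖ ^ 2 + ‖z - w‖ ^ 2 = 2 * ‖z‖ ^ 2 + 2 * ‖w‖ ^ 2 := by
  rw [norm_add_sq (𝕜 := ℂ), norm_sub_sq (𝕜 := ℂ)]; ring

private lemma arith_disc (ε a2 b2 A B G : ℝ)
    (hd : ∀ t : ℝ, A + t ^ 2 * B + 2 * t * G ≤ (1 + ε) * (a2 + t ^ 2 * b2)) :
    G ^ 2 ≤ ((1 + ε) * a2 - A) * ((1 + ε) * b2 - B) := by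
  have h := discrim_le_zero (a := (1 + ε) * b2 - B) (b := -(2 * G)) (c := (1 + ε) * a2 - A)
    (fun s => by nlinarith [hd s])
  rw [discrim] at h
  nlinarith [h]

private lemma arith_core (ε s2 s1 a b A B G : ℝ)
    (hε : 0 < ε) (hq2 : 0 ≤ s2) (hq1 : 0 ≤ s1) (hs2 : s2 ^ 2 = 2 * ε) (hs1 : s1 ^ 2 = 1 + ε)
    (ha : 0 ≤ a) (hb : 0 ≤ b) (hA0 : 0 ≤ A)
    (hlow : (1 - ε) * b ^ 2 ≤ B) (hBup : B ≤ (1 + ε) * b ^ 2)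
    (hdisc : G ^ 2 ≤ ((1 + ε) * a ^ 2 - A) * ((1 + ε) * b ^ 2 - B)) :
    ((1 - (3 * ε + 2 * s2 * s1)) * (a ^ 2 + b ^ 2) ≤ (1 + ε) * a ^ 2 + B + 2 * G) ∧
      ((1 + ε) * a ^ 2 + B + 2 * G ≤ (1 + (3 * ε + 2 * s2 * s1)) * (a ^ 2 + b ^ 2)) := by
  have hKnn : (0:ℝ) ≤ (s1 * a) * (s2 * b) := by positivity
  have hG2 : G ^ 2 ≤ ((s1 * a) * (s2 * b)) ^ 2 := by
    have hXα : (1 + ε) * a ^ 2 - A ≤ (s1 * a) ^ 2 := by nlinarith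
    have hYβ : (1 + ε) * b ^ 2 - B ≤ (s2 * b) ^ 2 := by nlinarith
    have hβ0 : (0:ℝ) ≤ (1 + ε) * b ^ 2 - B := by linarith
    calc G ^ 2 ≤ _ := hdisc
      _ ≤ ((s1 * a) ^ 2) * ((s2 * b) ^ 2) := mul_le_mul hXα hYβ hβ0 (by positivity)
      _ = _ := by ring
  have hGabs : |G| ≤ (s1 * a) * (s2 * b) := by
    have h1 := Real.sqrt_le_sqrt hG2
    rwa [Real.sqrt_sq_eq_abs, Real.sqrt_sq hKnn] at h1
  obtain ⟨hGge, hGle⟩ := abs_le.mp hGabs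
  constructor
  · nlinarith [mul_nonneg (mul_nonneg hq2 hq1) (sq_nonneg (a - b)),
      mul_nonneg hε.le (sq_nonneg a), mul_nonneg hε.le (sq_nonneg b),
      mul_nonneg (mul_nonneg hq2 hq1) (sq_nonneg a),
      mul_nonneg (mul_nonneg hq2 hq1) (sq_nonneg b)]
  · nlinarith [mul_nonneg (mul_nonneg hq2 hq1) (sq_nonneg (a - b)),
      mul_nonneg hε.le (sq_nonneg a), mul_nonneg hε.le (sq_nonneg b),
      mul_nonneg (mul_nonneg hq2 hq1) (sq_nonneg a),
      mul_nonneg (mul_nonneg hq2 hq1) (sq_nonneg b)]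

set_option maxHeartbeats 4000000 in
theorem stmt7 {H : Type*} [NormedAddCommGroup H] [InnerProductSpace ℂ H]
    (ε : ℝ) (hε : 0 < ε)
    (H₀ H₁ : Submodule ℂ H) [Submodule.HasOrthogonalProjection H₀] [Submodule.HasOrthogonalProjection H₁]
    (horth : ∀ x ∈ H₀, ∀ y ∈ H₁, ⟪x, y⟫_ℂ = 0) (hsum : H₀ ⊔ H₁ = ⊤)
    {J : Type*} (f : J → H)
    (hBessel : ∀ x : H, ∑' j, ‖⟪x, f j⟫_ℂ‖ ^ 2 ≤ (1 + ε) * ‖x‖ ^ 2)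
    (hlower : ∀ y ∈ H₁, (1 - ε) * ‖y‖ ^ 2 ≤
      ∑' j, ‖⟪y, (Submodule.orthogonalProjectionOnto H₁ (f j) : H)⟫_ℂ‖ ^ 2)
    {I : Type*} (h : I → H)
    (htight : ∀ x : H,
      (∑' i, ‖⟪x, h i⟫_ℂ‖ ^ 2) + ∑' j, ‖⟪x, f j⟫_ℂ‖ ^ 2 = (1 + ε) * ‖x‖ ^ 2) :
    ∀ x : H,
      ((1 - (3 * ε + 2 * Real.sqrt (2 * ε) * Real.sqrt (1 + ε))) * ‖x‖ ^ 2 ≤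
        (∑' i, ‖⟪x, (Submodule.orthogonalProjectionOnto H₀ (h i) : H)⟫_ℂ‖ ^ 2) +
          ∑' j, ‖⟪x, f j⟫_ℂ‖ ^ 2) ∧
      ((∑' i, ‖⟪x, (Submodule.orthogonalProjectionOnto H₀ (h i) : H)⟫_ℂ‖ ^ 2) +
          ∑' j, ‖⟪x, f j⟫_ℂ‖ ^ 2 ≤
        (1 + (3 * ε + 2 * Real.sqrt (2 * ε) * Real.sqrt (1 + ε))) * ‖x‖ ^ 2) := by
  have hE : H₁ = H₀ᗮ := by
    apply le_antisymm
    · intro y hy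
      rw [Submodule.mem_orthogonal]
      exact fun u hu => horth u hu y hy
    · intro y hy
      rw [Submodule.mem_orthogonal] at hy
      have hmem : y ∈ H₀ ⊔ H₁ := by rw [hsum]; trivial
      obtain ⟨a, ha, b, hb, hab⟩ := Submodule.mem_sup.mp hmem
      have h1 : ⟪a, y⟫_ℂ = 0 := hy a ha
      rw [← hab, inner_add_right, horth a ha b hb, add_zero] at h1
      have ha0 : a = 0 := inner_self_eq_zero.mp h1
      rw [← hab, ha0, zero_add]; exact hb
  subst hE
  intro x
  set x₀ : H := ↑(Submodule.orthogonalProjectionOnto H₀ x) with hx0def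
  set x₁ : H := ↑(Submodule.orthogonalProjectionOnto H₀ᗮ x) with hx1def
  have hx : x₀ + x₁ = x := Submodule.starProjection_add_starProjection_orthogonal (K := H₀) x
  have hx₀ : x₀ ∈ H₀ := (Submodule.orthogonalProjectionOnto H₀ x).2
  have hx₁ : x₁ ∈ H₀ᗮ := (Submodule.orthogonalProjectionOnto H₀ᗮ x).2
  have hinner01 : ⟪x₀, x₁⟫_ℂ = 0 := ((Submodule.mem_orthogonal _ _).mp hx₁) x₀ hx₀
  have hnx : ‖x‖ ^ 2 = ‖x₀‖ ^ 2 + ‖x₁‖ ^ 2 := by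
    rw [← hx, norm_add_sq (𝕜 := ℂ), hinner01]; simp
  have hnd : ‖x₀ - x₁‖ ^ 2 = ‖x₀‖ ^ 2 + ‖x₁‖ ^ 2 := by
    rw [norm_sub_sq (𝕜 := ℂ), hinner01]; simp
  have hPx₁ : ((Submodule.orthogonalProjectionOnto H₀ᗮ) x₁ : H) = x₁ := by
    have h2 := Submodule.orthogonalProjectionOnto_mem_subspace_eq_self (K := H₀ᗮ) ⟨x₁, hx₁⟩
    simpa using congrArg Subtype.val h2
  have hgoal1 : (∑' i, ‖⟪x, ((Submodule.orthogonalProjectionOnto H₀) (h i) : H)⟫_ℂ‖ ^ 2)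
      = ∑' i, ‖⟪x₀, h i⟫_ℂ‖ ^ 2 :=
    tsum_congr fun i => by rw [Submodule.coe_orthogonalProjectionOnto_apply, ← Submodule.inner_starProjection_left_eq_right,
        ← Submodule.coe_orthogonalProjectionOnto_apply, ← hx0def]
  rw [hgoal1]
  have hab : ∀ j, ⟪x, f j⟫_ℂ = ⟪x₀, f j⟫_ℂ + ⟪x₁, f j⟫_ℂ := fun j => by
    rw [← hx, inner_add_left]
  have hzw : ∀ i, ⟪x, h i⟫_ℂ = ⟪x₀, h i⟫_ℂ + ⟪x₁, h i⟫_ℂ := fun i => by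
    rw [← hx, inner_add_left]
  have hlow : (1 - ε) * ‖x₁‖ ^ 2 ≤ ∑' j, ‖⟪x₁, f j⟫_ℂ‖ ^ 2 := by
    have h1 := hlower x₁ hx₁
    have h2 : ∀ j, ⟪x₁, ((Submodule.orthogonalProjectionOnto H₀ᗮ) (f j) : H)⟫_ℂ = ⟪x₁, f j⟫_ℂ := fun j => by
      rw [Submodule.coe_orthogonalProjectionOnto_apply, ← Submodule.inner_starProjection_left_eq_right,
          ← Submodule.coe_orthogonalProjectionOnto_apply, hPx₁]
    simpa only [h2] using h1
  have htx₀ := htight x₀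
  have htx₁ := htight x₁
  have htx := htight x
  have hA0 : (0:ℝ) ≤ ∑' j, ‖⟪x₀, f j⟫_ℂ‖ ^ 2 := tsum_nonneg fun j => by positivity
  have hHi0 : (0:ℝ) ≤ ∑' i, ‖⟪x₀, h i⟫_ℂ‖ ^ 2 := tsum_nonneg fun i => by positivity
  have hC0' : (0:ℝ) ≤ ∑' j, ‖⟪x, f j⟫_ℂ‖ ^ 2 := tsum_nonneg fun j => by positivity
  have hBx₁ := hBessel x₁
  have hBx₀ := hBessel x₀
  have hBx := hBessel x
  have hq2 : (0:ℝ) ≤ Real.sqrt (2 * ε) := Real.sqrt_nonneg _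
  have hq1 : (0:ℝ) ≤ Real.sqrt (1 + ε) := Real.sqrt_nonneg _
  have hs2 : Real.sqrt (2 * ε) ^ 2 = 2 * ε := Real.sq_sqrt (by linarith)
  have hs1 : Real.sqrt (1 + ε) ^ 2 = 1 + ε := Real.sq_sqrt (by linarith)
  rw [hnx] at hBx htx ⊢
  by_cases hsb : Summable fun j => ‖⟪x₁, f j⟫_ℂ‖ ^ 2
  · by_cases hsa : Summable fun j => ‖⟪x₀, f j⟫_ℂ‖ ^ 2
    · -- main case: both summable
      have hG : Summable fun j => ((starRingEnd ℂ) ⟪x₀, f j⟫_ℂ * ⟪x₁, f j⟫_ℂ).re := by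
        apply Summable.of_abs
        apply Summable.of_nonneg_of_le (fun j => abs_nonneg _) (fun j => ?_)
          ((hsa.add hsb).mul_left (1/2 : ℝ))
        have h1 : |((starRingEnd ℂ) ⟪x₀, f j⟫_ℂ * ⟪x₁, f j⟫_ℂ).re|
            ≤ ‖⟪x₀, f j⟫_ℂ‖ * ‖⟪x₁, f j⟫_ℂ‖ := by
          calc |((starRingEnd ℂ) ⟪x₀, f j⟫_ℂ * ⟪x₁, f j⟫_ℂ).re|
              ≤ ‖(starRingEnd ℂ) ⟪x₀, f j⟫_ℂ * ⟪x₁, f j⟫_ℂ‖ :=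
                Complex.abs_re_le_norm _
            _ = ‖⟪x₀, f j⟫_ℂ‖ * ‖⟪x₁, f j⟫_ℂ‖ := by
                rw [norm_mul, Complex.norm_conj]
        nlinarith [sq_nonneg (‖⟪x₀, f j⟫_ℂ‖ - ‖⟪x₁, f j⟫_ℂ‖)]
      have Ht : ∀ t : ℝ,
          (∑' j, ‖⟪x₀, f j⟫_ℂ‖ ^ 2) + t ^ 2 * (∑' j, ‖⟪x₁, f j⟫_ℂ‖ ^ 2)
            + 2 * t * (∑' j, ((starRingEnd ℂ) ⟪x₀, f j⟫_ℂ * ⟪x₁, f j⟫_ℂ).re)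
            ≤ (1 + ε) * (‖x₀‖ ^ 2 + t ^ 2 * ‖x₁‖ ^ 2) := by
        intro t
        have hzt : ‖x₀ + (t : ℂ) • x₁‖ ^ 2 = ‖x₀‖ ^ 2 + t ^ 2 * ‖x₁‖ ^ 2 := by
          rw [norm_add_sq (𝕜 := ℂ), inner_smul_right, hinner01, mul_zero, norm_smul]
          simp [mul_pow]
        have h1 := hBessel (x₀ + (t : ℂ) • x₁)
        rw [hzt] at h1
        have h2 : ∀ j, ‖⟪x₀ + (t : ℂ) • x₁, f j⟫_ℂ‖ ^ 2
            = ‖⟪x₀, f j⟫_ℂ‖ ^ 2 + t ^ 2 * ‖⟪x₁, f j⟫_ℂ‖ ^ 2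
              + 2 * t * ((starRingEnd ℂ) ⟪x₀, f j⟫_ℂ * ⟪x₁, f j⟫_ℂ).re := fun j => by
          rw [inner_add_left, inner_smul_left, Complex.conj_ofReal, complex_norm_add_sq]
        rw [tsum_congr h2, Summable.tsum_add (hsa.add (hsb.mul_left (t ^ 2))) (hG.mul_left (2 * t)),
          Summable.tsum_add hsa (hsb.mul_left (t ^ 2)), tsum_mul_left, tsum_mul_left] at h1
        exact h1
      have hCsplit : (∑' j, ‖⟪x, f j⟫_ℂ‖ ^ 2)
          = (∑' j, ‖⟪x₀, f j⟫_ℂ‖ ^ 2) + (∑' j, ‖⟪x₁, f j⟫_ℂ‖ ^ 2)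
            + 2 * (∑' j, ((starRingEnd ℂ) ⟪x₀, f j⟫_ℂ * ⟪x₁, f j⟫_ℂ).re) := by
        have h2 : ∀ j, ‖⟪x, f j⟫_ℂ‖ ^ 2
            = ‖⟪x₀, f j⟫_ℂ‖ ^ 2 + ‖⟪x₁, f j⟫_ℂ‖ ^ 2
              + 2 * ((starRingEnd ℂ) ⟪x₀, f j⟫_ℂ * ⟪x₁, f j⟫_ℂ).re := fun j => by
          have h3 := complex_norm_add_sq (⟪x₀, f j⟫_ℂ) (⟪x₁, f j⟫_ℂ) 1
          rw [hab j]
          simpa using h3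
        rw [tsum_congr h2, Summable.tsum_add (hsa.add hsb) (hG.mul_left 2), Summable.tsum_add hsa hsb,
          tsum_mul_left]
      have hdisc := arith_disc ε (‖x₀‖ ^ 2) (‖x₁‖ ^ 2)
        (∑' j, ‖⟪x₀, f j⟫_ℂ‖ ^ 2) (∑' j, ‖⟪x₁, f j⟫_ℂ‖ ^ 2)
        (∑' j, ((starRingEnd ℂ) ⟪x₀, f j⟫_ℂ * ⟪x₁, f j⟫_ℂ).re) Ht
      have hmain := arith_core ε (Real.sqrt (2 * ε)) (Real.sqrt (1 + ε)) ‖x₀‖ ‖x₁‖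
        (∑' j, ‖⟪x₀, f j⟫_ℂ‖ ^ 2) (∑' j, ‖⟪x₁, f j⟫_ℂ‖ ^ 2)
        (∑' j, ((starRingEnd ℂ) ⟪x₀, f j⟫_ℂ * ⟪x₁, f j⟫_ℂ).re)
        hε hq2 hq1 hs2 hs1 (norm_nonneg x₀) (norm_nonneg x₁) hA0 hlow hBx₁ hdisc
      constructor
      · linarith [hmain.1, htx₀, hCsplit]
      · linarith [hmain.2, htx₀, hCsplit]
    · -- a not summable
      have hA0' : (∑' j, ‖⟪x₀, f j⟫_ℂ‖ ^ 2) = 0 := tsum_eq_zero_of_not_summable hsa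
      have hCns : ¬ Summable fun j => ‖⟪x, f j⟫_ℂ‖ ^ 2 := by
        intro hs
        apply hsa
        have h1 : Summable fun j => ‖⟪x, f j⟫_ℂ - ⟪x₁, f j⟫_ℂ‖ ^ 2 := aux_summable_sub hs hsb
        exact (summable_congr fun j => by rw [hab j, add_sub_cancel_right]).mpr h1
      have hC0 : (∑' j, ‖⟪x, f j⟫_ℂ‖ ^ 2) = 0 := tsum_eq_zero_of_not_summable hCns
      have hx₀ne : x₀ ≠ 0 := by
        intro h0
        exact hsa ((summable_congr fun j => by simp [h0]).mpr summable_zero)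
      have hn0pos : (0:ℝ) < ‖x₀‖ ^ 2 := by
        have := norm_pos_iff.mpr hx₀ne
        positivity
      have hsh0 : Summable fun i => ‖⟪x₀, h i⟫_ℂ‖ ^ 2 := by
        by_contra hns
        have h1 : (∑' i, ‖⟪x₀, h i⟫_ℂ‖ ^ 2) = 0 := tsum_eq_zero_of_not_summable hns
        nlinarith [htx₀]
      have hkey : ‖x₁‖ ^ 2 = 0 ∨ 1 ≤ ε := by
        by_cases hsh1 : Summable fun i => ‖⟪x₁, h i⟫_ℂ‖ ^ 2
        · have hsx : Summable fun i => ‖⟪x, h i⟫_ℂ‖ ^ 2 :=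
            (summable_congr fun i => by rw [hzw i]).mpr (aux_summable_add hsh0 hsh1)
          have hsd : Summable fun i => ‖⟪x₀ - x₁, h i⟫_ℂ‖ ^ 2 :=
            (summable_congr fun i => by rw [inner_sub_left]).mpr (aux_summable_sub hsh0 hsh1)
          have hpar : (∑' i, ‖⟪x, h i⟫_ℂ‖ ^ 2) + (∑' i, ‖⟪x₀ - x₁, h i⟫_ℂ‖ ^ 2)
              = 2 * (∑' i, ‖⟪x₀, h i⟫_ℂ‖ ^ 2) + 2 * (∑' i, ‖⟪x₁, h i⟫_ℂ‖ ^ 2) := by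
            rw [← Summable.tsum_add hsx hsd, ← tsum_mul_left, ← tsum_mul_left,
              ← Summable.tsum_add (hsh0.mul_left 2) (hsh1.mul_left 2)]
            exact tsum_congr fun i => by rw [hzw i, inner_sub_left, complex_parallelogram]
          have hfd : (∑' j, ‖⟪x₀ - x₁, f j⟫_ℂ‖ ^ 2) = 0 := by
            apply tsum_eq_zero_of_not_summable
            intro hs
            apply hsa
            have h1 : Summable fun j => ‖⟪x₀ - x₁, f j⟫_ℂ + ⟪x₁, f j⟫_ℂ‖ ^ 2 :=
              aux_summable_add hs hsb
            exact (summable_congr fun j => by rw [← inner_add_left, sub_add_cancel]).mpr h1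
          have htd := htight (x₀ - x₁)
          rw [hfd, hnd] at htd
          rw [hC0] at htx
          rw [hA0'] at htx₀
          have hW : (∑' i, ‖⟪x₁, h i⟫_ℂ‖ ^ 2) = (1 + ε) * ‖x₁‖ ^ 2 := by
            nlinarith [htx, htd, hpar, htx₀]
          have hBs0 : (∑' j, ‖⟪x₁, f j⟫_ℂ‖ ^ 2) = 0 := by linarith [htx₁, hW]
          by_cases hn1 : ‖x₁‖ ^ 2 = 0
          · exact Or.inl hn1
          · right
            have hpos : 0 < ‖x₁‖ ^ 2 := lt_of_le_of_ne (sq_nonneg _) (Ne.symm hn1)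
            nlinarith [hlow, hBs0]
        · exfalso
          have hxh_ns : ¬ Summable fun i => ‖⟪x, h i⟫_ℂ‖ ^ 2 := by
            intro hs
            apply hsh1
            have h1 : Summable fun i => ‖⟪x, h i⟫_ℂ - ⟪x₀, h i⟫_ℂ‖ ^ 2 :=
              aux_summable_sub hs hsh0
            exact (summable_congr fun i => by rw [hzw i, add_sub_cancel_left]).mpr h1
          have h1 : (∑' i, ‖⟪x, h i⟫_ℂ‖ ^ 2) = 0 := tsum_eq_zero_of_not_summable hxh_ns
          nlinarith [htx, h1, hC0, sq_nonneg ‖x₁‖, hε, mul_nonneg hε.le (sq_nonneg ‖x₁‖),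
            mul_pos hε hn0pos]
      have hHi : (∑' i, ‖⟪x₀, h i⟫_ℂ‖ ^ 2) = (1 + ε) * ‖x₀‖ ^ 2 := by
        linarith [htx₀, hA0']
      rcases hkey with hk | hk
      · constructor
        · nlinarith [hC0, hHi, hε, mul_nonneg (mul_nonneg hq2 hq1) (sq_nonneg ‖x₀‖),
            mul_nonneg hε.le (sq_nonneg ‖x₀‖)]
        · nlinarith [hC0, hHi, hε, mul_nonneg (mul_nonneg hq2 hq1) (sq_nonneg ‖x₀‖),
            mul_nonneg hε.le (sq_nonneg ‖x₀‖)]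
      · constructor
        · nlinarith [hC0, hHi, hε, mul_nonneg (mul_nonneg hq2 hq1) (sq_nonneg ‖x₀‖),
            mul_nonneg (mul_nonneg hq2 hq1) (sq_nonneg ‖x₁‖),
            mul_nonneg hε.le (sq_nonneg ‖x₀‖), mul_nonneg hε.le (sq_nonneg ‖x₁‖),
            mul_nonneg (sub_nonneg.mpr hk) (sq_nonneg ‖x₁‖)]
        · nlinarith [hC0, hHi, hε, mul_nonneg (mul_nonneg hq2 hq1) (sq_nonneg ‖x₀‖),
            mul_nonneg (mul_nonneg hq2 hq1) (sq_nonneg ‖x₁‖),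
            mul_nonneg hε.le (sq_nonneg ‖x₀‖), mul_nonneg hε.le (sq_nonneg ‖x₁‖),
            mul_nonneg (sub_nonneg.mpr hk) (sq_nonneg ‖x₁‖)]
  · -- b not summable
    have hBs0 : (∑' j, ‖⟪x₁, f j⟫_ℂ‖ ^ 2) = 0 := tsum_eq_zero_of_not_summable hsb
    have hx₁ne : x₁ ≠ 0 := by
      intro h0
      exact hsb ((summable_congr fun j => by simp [h0]).mpr summable_zero)
    have hn1pos : (0:ℝ) < ‖x₁‖ ^ 2 := by
      have := norm_pos_iff.mpr hx₁ne
      positivity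
    rw [hBs0] at hlow
    have hε1 : 1 ≤ ε := by nlinarith [hlow, hn1pos]
    constructor
    · have h2 : (1 - (3 * ε + 2 * Real.sqrt (2 * ε) * Real.sqrt (1 + ε)))
          * (‖x₀‖ ^ 2 + ‖x₁‖ ^ 2) ≤ 0 := by
        apply mul_nonpos_of_nonpos_of_nonneg
        · nlinarith [mul_nonneg hq2 hq1]
        · positivity
      linarith [hHi0, hC0']
    · have h3 : (1 + ε) * ‖x₀‖ ^ 2 + (1 + ε) * (‖x₀‖ ^ 2 + ‖x₁‖ ^ 2)
          ≤ (1 + (3 * ε + 2 * Real.sqrt (2 * ε) * Real.sqrt (1 + ε)))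
            * (‖x₀‖ ^ 2 + ‖x₁‖ ^ 2) := by
        nlinarith [mul_nonneg (mul_nonneg hq2 hq1) (sq_nonneg ‖x₀‖),
          mul_nonneg (mul_nonneg hq2 hq1) (sq_nonneg ‖x₁‖),
          mul_nonneg (sub_nonneg.mpr hε1) (sq_nonneg ‖x₀‖),
          mul_nonneg hε.le (sq_nonneg ‖x₁‖), mul_nonneg hε.le (sq_nonneg ‖x₀‖)]
      linarith [htx₀, hA0, hBx, h3]
end

section
/- Let Ψ: X → H be a continuous Bessel map from a σ-finite measure space (X,Σ,μ) to a separable Hilbert space H. Then for all ε>0 there exist a countable measurable partition (X_j)_{j∈J} of X and points t_j ∈ X_j such that ‖Ψ(t) − Ψ(t_j)‖ < ε for all t ∈ X_j and ∫ ‖Ψ(t) − Σ_{j∈J} Ψ(t_j) 1_{X_j}(t)‖ dμ(t) < ε. -/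
open scoped InnerProductSpace
open MeasureTheory
open scoped ENNReal

theorem stmt10 {X : Type*} [MeasurableSpace X] (μ : Measure X) [SigmaFinite μ]
    {H : Type*} [NormedAddCommGroup H] [InnerProductSpace ℂ H] [CompleteSpace H]
    [TopologicalSpace.SeparableSpace H] [MeasurableSpace H] [BorelSpace H]
    (Ψ : X → H) (hmeas : Measurable Ψ) (B : ℝ)
    (hBessel : ∀ x : H, (∫ t, ‖⟪x, Ψ t⟫_ℂ‖ ^ 2 ∂μ) ≤ B * ‖x‖ ^ 2)
    (ε : ℝ) (hε : 0 < ε) :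
    ∃ (J : Type) (_ : Countable J) (Xs : J → Set X) (t : J → X),
      (∀ j, MeasurableSet (Xs j)) ∧
      Pairwise (fun i j => Disjoint (Xs i) (Xs j)) ∧
      (⋃ j, Xs j) = Set.univ ∧
      (∀ j, t j ∈ Xs j) ∧
      (∀ j, ∀ s ∈ Xs j, ‖Ψ s - Ψ (t j)‖ < ε) ∧
      (∫ s, ‖Ψ s - ∑' j, (Xs j).indicator (fun _ => Ψ (t j)) s‖ ∂μ) < ε := by
  classical
  by_cases hX : Nonempty X
  case neg =>
    rw [not_nonempty_iff] at hX
    refine ⟨Empty, inferInstance, Empty.elim, Empty.elim, fun j => j.elim,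
      fun i => i.elim, ?_, fun j => j.elim, fun j => j.elim, ?_⟩
    · ext x; exact (hX.false x).elim
    · have hμ : μ = 0 := by
        ext s _
        rw [Set.eq_empty_of_isEmpty s]
        simp
      rw [hμ]
      simpa using hε
  obtain ⟨x0⟩ := hX
  have hHne : Nonempty H := ⟨Ψ x0⟩
  obtain ⟨D, hD⟩ := TopologicalSpace.exists_dense_seq H
  -- spanning partition
  set A : ℕ → Set X := disjointed (spanningSets μ) with hA
  have hAmeas : ∀ n, MeasurableSet (A n) :=
    MeasurableSet.disjointed (measurableSet_spanningSets μ)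
  have hAdisj : Pairwise (Function.onFun Disjoint A) := disjoint_disjointed _
  have hAunion : (⋃ n, A n) = Set.univ := by
    rw [hA, iUnion_disjointed, iUnion_spanningSets]
  have hAfin : ∀ n, μ (A n) < ⊤ := fun n =>
    (measure_mono (disjointed_subset _ _)).trans_lt (measure_spanningSets_lt_top μ n)
  -- the scales
  set δ : ℕ → ℝ := fun n => min ε (ε / (2 ^ (n + 2) * ((μ (A n)).toReal + 1))) with hδ
  have hδpos : ∀ n, 0 < δ n := fun n => lt_min hε (by positivity)
  have hδle : ∀ n, δ n ≤ ε := fun n => min_le_left _ _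
  have hδμ : ∀ n, δ n * (μ (A n)).toReal ≤ ε / 2 ^ (n + 2) := by
    intro n
    have hm : (0:ℝ) ≤ (μ (A n)).toReal := ENNReal.toReal_nonneg
    have h1 : δ n ≤ ε / (2 ^ (n + 2) * ((μ (A n)).toReal + 1)) := min_le_right _ _
    have h2 : (0:ℝ) < 2 ^ (n + 2) := by positivity
    calc δ n * (μ (A n)).toReal
        ≤ ε / (2 ^ (n + 2) * ((μ (A n)).toReal + 1)) * (μ (A n)).toReal :=
          mul_le_mul_of_nonneg_right h1 hm
      _ ≤ ε / 2 ^ (n + 2) := by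
          rw [div_mul_eq_mul_div, div_le_div_iff₀ (by positivity) h2]
          nlinarith
  -- index function
  have hNex : ∀ s : X, ∃ n, s ∈ A n := fun s =>
    Set.mem_iUnion.1 (hAunion.symm ▸ Set.mem_univ s)
  set N : X → ℕ := fun s => Nat.find (hNex s) with hN
  have hNmem : ∀ s, s ∈ A (N s) := fun s => Nat.find_spec (hNex s)
  have hNuniq : ∀ s n, s ∈ A n → N s = n := by
    intro s n hn
    by_contra h
    exact Set.disjoint_left.1 (hAdisj h) (hNmem s) hn
  have hNmeas : Measurable N := by
    apply measurable_to_nat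
    intro y
    have hpre : N ⁻¹' {N y} = A (N y) := by
      apply Set.Subset.antisymm
      · intro s h
        have h' : N s = N y := h
        exact h' ▸ hNmem s
      · intro s h
        exact hNuniq s _ h
    rw [hpre]; exact hAmeas _
  -- the fine partition
  set Bb : ℕ → ℕ → Set X := fun n m => A n ∩ Ψ ⁻¹' Metric.ball (D m) (δ n / 3) with hBb
  set C : ℕ → ℕ → Set X := fun n => disjointed (Bb n) with hC
  have hCmeas : ∀ n m, MeasurableSet (C n m) := fun n =>
    MeasurableSet.disjointed (fun m => (hAmeas n).inter (hmeas measurableSet_ball))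
  have hCsub : ∀ n m, C n m ⊆ Bb n m := fun n m => disjointed_subset _ _
  have hCunion : ∀ n, (⋃ m, C n m) = A n := by
    intro n
    rw [hC, iUnion_disjointed]
    apply Set.Subset.antisymm (Set.iUnion_subset fun m => Set.inter_subset_left)
    intro s hs
    obtain ⟨m, hm⟩ := hD.exists_dist_lt (Ψ s) (by positivity : (0:ℝ) < δ n / 3)
    exact Set.mem_iUnion.2 ⟨m, hs, Metric.mem_ball.2 hm⟩
  have hCdisj : ∀ p q : ℕ × ℕ, p ≠ q → Disjoint (C p.1 p.2) (C q.1 q.2) := by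
    intro p q hpq
    rcases eq_or_ne p.1 q.1 with h1 | h1
    · have h2 : p.2 ≠ q.2 := fun h2 => hpq (Prod.ext h1 h2)
      rw [h1]
      exact (disjoint_disjointed (Bb q.1)) h2
    · exact Set.disjoint_of_subset ((hCsub _ _).trans Set.inter_subset_left)
        ((hCsub _ _).trans Set.inter_subset_left) (hAdisj h1)
  have key : ∀ n m, ∀ s ∈ C n m, ∀ s' ∈ C n m, ‖Ψ s - Ψ s'‖ < δ n := by
    intro n m s hs s' hs'
    have h1 : dist (Ψ s) (D m) < δ n / 3 := Metric.mem_ball.1 (hCsub n m hs).2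
    have h2 : dist (Ψ s') (D m) < δ n / 3 := Metric.mem_ball.1 (hCsub n m hs').2
    have hd : 0 < δ n := hδpos n
    rw [← dist_eq_norm]
    calc dist (Ψ s) (Ψ s') ≤ dist (Ψ s) (D m) + dist (D m) (Ψ s') := dist_triangle _ _ _
      _ < δ n / 3 + δ n / 3 := by rw [dist_comm (D m)]; exact add_lt_add h1 h2
      _ < δ n := by linarith
  -- the index type
  refine ⟨{p : ℕ × ℕ // (C p.1 p.2).Nonempty}, inferInstance,
    fun j => C j.1.1 j.1.2, fun j => j.2.some, fun j => hCmeas _ _,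
    fun i j hij => hCdisj i.1 j.1 (fun h => hij (Subtype.ext h)), ?_,
    fun j => j.2.some_mem, fun j s hs => (key _ _ s hs _ j.2.some_mem).trans_le (hδle _), ?_⟩
  · apply Set.Subset.antisymm (Set.subset_univ _)
    intro s _
    obtain ⟨m, hm⟩ : ∃ m, s ∈ C (N s) m :=
      Set.mem_iUnion.1 ((hCunion (N s)).symm ▸ hNmem s)
    exact Set.mem_iUnion.2 ⟨⟨(N s, m), ⟨s, hm⟩⟩, hm⟩
  -- the integral estimate
  have hle : ∀ s, ‖Ψ s - ∑' j : {p : ℕ × ℕ // (C p.1 p.2).Nonempty},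
      (C j.1.1 j.1.2).indicator (fun _ => Ψ j.2.some) s‖ ≤ δ (N s) := by
    intro s
    obtain ⟨m, hm⟩ : ∃ m, s ∈ C (N s) m :=
      Set.mem_iUnion.1 ((hCunion (N s)).symm ▸ hNmem s)
    have hF : (∑' j : {p : ℕ × ℕ // (C p.1 p.2).Nonempty},
        (C j.1.1 j.1.2).indicator (fun _ => Ψ j.2.some) s)
        = Ψ (⟨(N s, m), ⟨s, hm⟩⟩ : {p : ℕ × ℕ // (C p.1 p.2).Nonempty}).2.some := by
      rw [tsum_eq_single (⟨(N s, m), ⟨s, hm⟩⟩ : {p : ℕ × ℕ // (C p.1 p.2).Nonempty})]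
      · exact Set.indicator_of_mem hm _
      · intro j' hj'
        apply Set.indicator_of_notMem
        intro hs'
        exact Set.disjoint_left.1
          (hCdisj j'.1 (N s, m) (fun h => hj' (Subtype.ext h))) hs' hm
    rw [hF]
    exact (key (N s) m s hm _ (Set.Nonempty.some_mem _)).le
  have hgmeas : Measurable (fun s => δ (N s)) := (measurable_from_nat (f := δ)).comp hNmeas
  have hlint : (∫⁻ s, ENNReal.ofReal (δ (N s)) ∂μ) ≤ ENNReal.ofReal (ε / 2) := by
    calc (∫⁻ s, ENNReal.ofReal (δ (N s)) ∂μ)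
        = ∫⁻ s in ⋃ n, A n, ENNReal.ofReal (δ (N s)) ∂μ := by
          rw [hAunion, Measure.restrict_univ]
      _ = ∑' n, ∫⁻ s in A n, ENNReal.ofReal (δ (N s)) ∂μ := lintegral_iUnion hAmeas hAdisj _
      _ = ∑' n, ENNReal.ofReal (δ n) * μ (A n) := by
          refine tsum_congr fun n => ?_
          rw [setLIntegral_congr_fun (hAmeas n)
            (fun s hs => by rw [hNuniq s n hs]),
            setLIntegral_const]
      _ ≤ ∑' n, ENNReal.ofReal (ε / 2 ^ (n + 2)) := by
          refine ENNReal.tsum_le_tsum fun n => ?_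
          rw [← ENNReal.ofReal_toReal (hAfin n).ne, ← ENNReal.ofReal_mul (hδpos n).le]
          exact ENNReal.ofReal_le_ofReal (hδμ n)
      _ = ENNReal.ofReal (ε / 2) := by
          have hterm : ∀ n : ℕ, ENNReal.ofReal (ε / 2 ^ (n + 2))
              = ENNReal.ofReal (ε / 4) * (2 : ℝ≥0∞)⁻¹ ^ n := by
            intro n
            have : ε / 2 ^ (n + 2) = ε / 4 * (1 / 2) ^ n := by
              rw [pow_add, div_pow, one_pow]; ring
            have h12 : ENNReal.ofReal (1 / 2) = 2⁻¹ := by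
              rw [one_div, ENNReal.ofReal_inv_of_pos (by norm_num)]
              norm_num
            rw [this, ENNReal.ofReal_mul (by positivity),
              ENNReal.ofReal_pow (by norm_num), h12]
          rw [tsum_congr hterm, ENNReal.tsum_mul_left, ENNReal.tsum_geometric,
            ENNReal.one_sub_inv_two, inv_inv]
          have h42 : (ε : ℝ) / 2 = ε / 4 * 2 := by ring
          rw [h42, ENNReal.ofReal_mul (by positivity), ENNReal.ofReal_ofNat]
  have hgint : Integrable (fun s => δ (N s)) μ := by
    refine ⟨hgmeas.aestronglyMeasurable, ?_⟩
    rw [hasFiniteIntegral_iff_ofReal (Filter.Eventually.of_forall fun s => (hδpos _).le)]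
    exact hlint.trans_lt ENNReal.ofReal_lt_top
  have hibound : ∫ s, δ (N s) ∂μ ≤ ε / 2 := by
    rw [integral_eq_lintegral_of_nonneg_ae (Filter.Eventually.of_forall fun s => (hδpos _).le)
      hgmeas.aestronglyMeasurable]
    calc (∫⁻ s, ENNReal.ofReal (δ (N s)) ∂μ).toReal
        ≤ (ENNReal.ofReal (ε / 2)).toReal :=
          ENNReal.toReal_mono ENNReal.ofReal_ne_top hlint
      _ = ε / 2 := ENNReal.toReal_ofReal (by positivity)
  calc (∫ s, ‖Ψ s - ∑' j : {p : ℕ × ℕ // (C p.1 p.2).Nonempty},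
        (C j.1.1 j.1.2).indicator (fun _ => Ψ j.2.some) s‖ ∂μ)
      ≤ ∫ s, δ (N s) ∂μ :=
        integral_mono_of_nonneg (Filter.Eventually.of_forall fun s => norm_nonneg _) hgint
          (Filter.Eventually.of_forall fun s => hle s)
    _ ≤ ε / 2 := hibound
    _ < ε := by linarith
end

section
/- For every ε > 0 there exists a finite unit norm tight frame (x_i)_{1≤i≤M} of a finite-dimensional Hilbert space such that for every subset I ⊂ {1,…,M} for which (x_i)_{i∈I} is a basis, the lower Riesz constant of (x_i)_{i∈I} is less than ε. Consequently there is no uniform constant A > 0 such that every finite unit norm tight frame contains a basis with lower Riesz bound at least A. -/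
open scoped InnerProductSpace

open Complex Finset

noncomputable def myOm (N : ℕ) : ℂ := Complex.exp (((2 * Real.pi / N : ℝ)) * Complex.I)

lemma myOm_zpow (N : ℕ) (m : ℤ) :
    myOm N ^ m = Complex.exp (((m * (2 * Real.pi / N) : ℝ)) * Complex.I) := by
  rw [myOm, ← Complex.exp_int_mul]
  congr 1; push_cast; ring

lemma myOm_abs (N : ℕ) (m : ℤ) : ‖myOm N ^ m‖ = 1 := by
  rw [myOm_zpow, Complex.norm_exp_ofReal_mul_I]

lemma myOm_norm (N : ℕ) (m : ℤ) : ‖myOm N ^ m‖ = 1 := myOm_abs N m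

lemma myOm_ne_zero (N : ℕ) : myOm N ≠ 0 := Complex.exp_ne_zero _

lemma myOm_conj (N : ℕ) (m : ℤ) : (starRingEnd ℂ) (myOm N ^ m) = myOm N ^ (-m) := by
  rw [myOm_zpow, myOm_zpow, ← Complex.exp_conj]
  congr 1
  rw [map_mul, Complex.conj_ofReal, Complex.conj_I]
  push_cast; ring

lemma myOm_pow_N (N : ℕ) (hN : 0 < N) : myOm N ^ (N : ℤ) = 1 := by
  rw [myOm_zpow]
  have hN' : (N:ℝ) ≠ 0 := by positivity
  have h : (((N : ℤ) : ℝ) * (2 * Real.pi / N) : ℝ) = 2 * Real.pi := by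
    push_cast; field_simp
  rw [h]
  push_cast
  exact Complex.exp_two_pi_mul_I

lemma myOm_ne_one (N : ℕ) (m : ℤ) (hm : m ≠ 0) (hm' : m.natAbs < N) : myOm N ^ m ≠ 1 := by
  rw [myOm_zpow]
  intro h
  rw [Complex.exp_eq_one_iff] at h
  obtain ⟨k, hk⟩ := h
  have hN0 : 0 < N := Nat.lt_of_le_of_lt (Nat.zero_le _) hm'
  have hN : (0:ℝ) < N := by exact_mod_cast hN0
  have him : ((m : ℝ) * (2 * Real.pi / N)) = (k : ℝ) * (2 * Real.pi) := by
    have := congrArg Complex.im hk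
    simpa using this
  have hmk : (m : ℝ) = (k : ℝ) * N := by
    have hπ := Real.pi_pos
    field_simp at him
    nlinarith [him]
  have hmk' : m = k * N := by exact_mod_cast hmk
  rcases eq_or_ne k 0 with hk0 | hk0
  · exact hm (by simp [hmk', hk0])
  · have : (N : ℤ) ≤ m.natAbs := by
      rw [hmk']
      calc (N:ℤ) ≤ k.natAbs * N := by
            have : 1 ≤ (k.natAbs : ℤ) := by
              exact_mod_cast Nat.one_le_iff_ne_zero.mpr (Int.natAbs_ne_zero.mpr hk0)
            nlinarith [Int.ofNat_zero_le N]
        _ = (k * N).natAbs := by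
            rw [Int.natAbs_mul]; push_cast; simp
    omega

lemma myOm_geom_sum (N : ℕ) (hN : 0 < N) (m : ℤ) (hm' : m.natAbs < N) :
    ∑ i : Fin N, myOm N ^ (m * (i : ℕ)) = if m = 0 then (N : ℂ) else 0 := by
  split_ifs with h
  · simp [h]
  · have hz1 : myOm N ^ m ≠ 1 := myOm_ne_one N m h hm'
    have hrw : ∀ i : ℕ, myOm N ^ (m * (i : ℕ)) = (myOm N ^ m) ^ i := by
      intro i; rw [zpow_mul, zpow_natCast]
    calc ∑ i : Fin N, myOm N ^ (m * (i:ℕ)) = ∑ i ∈ range N, (myOm N ^ m) ^ i := by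
          rw [Fin.sum_univ_eq_sum_range (fun i => myOm N ^ (m * (i:ℕ))) N]
          exact Finset.sum_congr rfl fun i _ => hrw i
      _ = ((myOm N ^ m) ^ N - 1) / (myOm N ^ m - 1) := geom_sum_eq hz1 N
      _ = 0 := by
          have : (myOm N ^ m) ^ N = 1 := by
            rw [← zpow_natCast, ← zpow_mul, mul_comm, zpow_mul, myOm_pow_N N hN, one_zpow]
          rw [this, sub_self, zero_div]

noncomputable def frameVec (n : ℕ) : Fin (n+1) → EuclideanSpace ℂ (Fin n) :=
  fun i => WithLp.toLp 2 (fun k : Fin n => ((Real.sqrt n : ℝ) : ℂ)⁻¹ * myOm (n+1) ^ ((i : ℤ) * ((k : ℤ) + 1)))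

lemma frameVec_norm (n : ℕ) (hn : 0 < n) (i : Fin (n+1)) : ‖frameVec n i‖ = 1 := by
  rw [EuclideanSpace.norm_eq]
  have h1 : ∀ k : Fin n, ‖frameVec n i k‖ ^ 2 = ((n:ℝ))⁻¹ := by
    intro k
    show ‖((Real.sqrt n : ℝ) : ℂ)⁻¹ * myOm (n+1) ^ ((i : ℤ) * ((k : ℤ) + 1))‖ ^ 2 = _
    rw [norm_mul, myOm_norm, mul_one, norm_inv, Complex.norm_real,
      Real.norm_eq_abs, _root_.abs_of_nonneg (Real.sqrt_nonneg _), inv_pow,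
      Real.sq_sqrt (by positivity)]
  rw [Finset.sum_congr rfl fun k _ => h1 k]
  simp only [Finset.sum_const, Finset.card_univ, Fintype.card_fin, nsmul_eq_mul]
  rw [mul_inv_cancel₀ (by positivity), Real.sqrt_one]

lemma frameVec_sum (n : ℕ) : ∑ i, frameVec n i = 0 := by
  ext k
  have happ : (∑ i, frameVec n i) k = ∑ i, frameVec n i k := by rw [WithLp.ofLp_sum, Finset.sum_apply]
  show (∑ i, frameVec n i) k = 0
  rw [happ]
  have hterm : ∀ i : Fin (n+1), frameVec n i k
      = ((Real.sqrt n : ℝ) : ℂ)⁻¹ * myOm (n+1) ^ (((k : ℤ) + 1) * (i : ℕ)) := by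
    intro i
    show ((Real.sqrt n : ℝ) : ℂ)⁻¹ * myOm (n+1) ^ ((i : ℤ) * ((k : ℤ) + 1)) = _
    congr 1
    push_cast
    ring
  rw [Finset.sum_congr rfl fun i _ => hterm i, ← Finset.mul_sum,
    myOm_geom_sum (n+1) (Nat.succ_pos n) ((k:ℤ)+1) (by have := k.isLt; omega)]
  have : ¬ ((k:ℤ) + 1 = 0) := by have := k.isLt; omega
  rw [if_neg this, mul_zero]

lemma frameVec_orth (n : ℕ) (hn : 0 < n) (k l : Fin n) :
    ∑ i : Fin (n+1), frameVec n i k * (starRingEnd ℂ) (frameVec n i l) =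
      if k = l then ((n:ℂ)+1)/(n:ℂ) else 0 := by
  have hc : ((Real.sqrt n : ℝ) : ℂ)⁻¹ * ((Real.sqrt n : ℝ) : ℂ)⁻¹ = ((n:ℝ):ℂ)⁻¹ := by
    rw [← mul_inv, ← Complex.ofReal_mul, Real.mul_self_sqrt (by positivity)]
  have hterm : ∀ i : Fin (n+1), frameVec n i k * (starRingEnd ℂ) (frameVec n i l)
      = ((n:ℝ):ℂ)⁻¹ * myOm (n+1) ^ (((k:ℤ) - (l:ℤ)) * (i:ℕ)) := by
    intro i
    show (((Real.sqrt n : ℝ) : ℂ)⁻¹ * myOm (n+1) ^ ((i : ℤ) * ((k : ℤ) + 1))) *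
      (starRingEnd ℂ) (((Real.sqrt n : ℝ) : ℂ)⁻¹ * myOm (n+1) ^ ((i : ℤ) * ((l : ℤ) + 1))) = _
    rw [map_mul, myOm_conj, map_inv₀, Complex.conj_ofReal]
    have hexp : myOm (n+1) ^ ((i : ℤ) * ((k : ℤ) + 1)) * myOm (n+1) ^ (-((i : ℤ) * ((l : ℤ) + 1)))
        = myOm (n+1) ^ (((k:ℤ) - (l:ℤ)) * (i:ℕ)) := by
      rw [← zpow_add₀ (myOm_ne_zero (n+1))]
      congr 1
      push_cast
      ring
    calc _ = (((Real.sqrt n : ℝ) : ℂ)⁻¹ * ((Real.sqrt n : ℝ) : ℂ)⁻¹) *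
          (myOm (n+1) ^ ((i : ℤ) * ((k : ℤ) + 1)) * myOm (n+1) ^ (-((i : ℤ) * ((l : ℤ) + 1)))) := by
            ring
      _ = _ := by rw [hc, hexp]
  rw [Finset.sum_congr rfl fun i _ => hterm i, ← Finset.mul_sum,
    myOm_geom_sum (n+1) (Nat.succ_pos n) ((k:ℤ) - (l:ℤ))
      (by have := k.isLt; have := l.isLt; omega)]
  have hiff : ((k:ℤ) - (l:ℤ) = 0) ↔ k = l := by
    rw [sub_eq_zero]
    constructor
    · intro h; exact Fin.ext (by exact_mod_cast h)
    · intro h; rw [h]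
  by_cases h : k = l
  · rw [if_pos (hiff.mpr h), if_pos h]
    push_cast
    field_simp
  · rw [if_neg (fun hh => h (hiff.mp hh)), if_neg h, mul_zero]

lemma normsq_c (z : ℂ) : ((‖z‖^2 : ℝ) : ℂ) = z * (starRingEnd ℂ) z := by
  rw [Complex.mul_conj, Complex.normSq_eq_norm_sq]

lemma frameVec_tight (n : ℕ) (hn : 0 < n) (y : EuclideanSpace ℂ (Fin n)) :
    ∑ i, ‖⟪y, frameVec n i⟫_ℂ‖ ^ 2 = (((n:ℕ)+1 : ℝ) / (n : ℝ)) * ‖y‖ ^ 2 := by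
  have hnorm : ‖y‖ ^ 2 = ∑ k : Fin n, ‖y k‖ ^ 2 := by
    rw [EuclideanSpace.norm_eq, Real.sq_sqrt (by positivity)]
  have hinner : ∀ i : Fin (n+1),
      ⟪y, frameVec n i⟫_ℂ = ∑ k : Fin n, (starRingEnd ℂ) (y k) * frameVec n i k := by
    intro i
    rw [PiLp.inner_apply]
    exact Finset.sum_congr rfl fun k _ => by rw [RCLike.inner_apply]; ring
  have key : ((∑ i, ‖⟪y, frameVec n i⟫_ℂ‖ ^ 2 : ℝ) : ℂ)
      = (((n:ℂ)+1)/(n:ℂ)) * ((∑ k : Fin n, ‖y k‖ ^ 2 : ℝ) : ℂ) := by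
    push_cast
    calc ∑ i : Fin (n+1), ((‖⟪y, frameVec n i⟫_ℂ‖:ℂ) ^ 2)
        = ∑ i : Fin (n+1), ⟪y, frameVec n i⟫_ℂ * (starRingEnd ℂ) ⟪y, frameVec n i⟫_ℂ := by
          refine Finset.sum_congr rfl fun i _ => ?_
          rw [← normsq_c]; push_cast; ring
      _ = ∑ i : Fin (n+1), ∑ k : Fin n, ∑ l : Fin n,
            ((starRingEnd ℂ) (y k) * y l) * (frameVec n i k * (starRingEnd ℂ) (frameVec n i l)) := by
          refine Finset.sum_congr rfl fun i _ => ?_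
          rw [hinner, map_sum, Finset.sum_mul_sum]
          refine Finset.sum_congr rfl fun k _ => Finset.sum_congr rfl fun l _ => ?_
          rw [map_mul, Complex.conj_conj]
          ring
      _ = ∑ k : Fin n, ∑ l : Fin n,
            ((starRingEnd ℂ) (y k) * y l) *
              (∑ i : Fin (n+1), frameVec n i k * (starRingEnd ℂ) (frameVec n i l)) := by
          rw [Finset.sum_comm]
          refine Finset.sum_congr rfl fun k _ => ?_
          rw [Finset.sum_comm]
          refine Finset.sum_congr rfl fun l _ => ?_
          rw [Finset.mul_sum]
      _ = ∑ k : Fin n, ∑ l : Fin n,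
            ((starRingEnd ℂ) (y k) * y l) * (if k = l then ((n:ℂ)+1)/(n:ℂ) else 0) := by
          refine Finset.sum_congr rfl fun k _ => Finset.sum_congr rfl fun l _ => ?_
          rw [frameVec_orth n hn k l]
      _ = ∑ k : Fin n, ((starRingEnd ℂ) (y k) * y k) * (((n:ℂ)+1)/(n:ℂ)) := by
          refine Finset.sum_congr rfl fun k _ => ?_
          simp [Finset.sum_ite_eq]
      _ = (((n:ℂ)+1)/(n:ℂ)) * ∑ k : Fin n, ((‖y k‖:ℂ) ^ 2) := by
          rw [Finset.mul_sum]
          refine Finset.sum_congr rfl fun k _ => ?_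
          have h3 : ((‖y k‖^2 : ℝ) : ℂ) = y k * (starRingEnd ℂ) (y k) := normsq_c (y k)
          push_cast at h3
          rw [h3]; ring
  rw [hnorm]
  have h2 : ((∑ i, ‖⟪y, frameVec n i⟫_ℂ‖ ^ 2 : ℝ) : ℂ)
      = (((((n:ℕ)+1:ℝ))/(n:ℝ) * ∑ k : Fin n, ‖y k‖ ^ 2 : ℝ) : ℂ) := by
    rw [key]; push_cast; ring
  exact_mod_cast h2

lemma main_exists (ε : ℝ) (hε : 0 < ε) :
    ∃ (n M : ℕ) (x : Fin M → EuclideanSpace ℂ (Fin n)),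
      0 < n ∧ 0 < M ∧ (∀ i, ‖x i‖ = 1) ∧
      (∀ y : EuclideanSpace ℂ (Fin n),
        ∑ i, ‖⟪y, x i⟫_ℂ‖ ^ 2 = ((M : ℝ) / (n : ℝ)) * ‖y‖ ^ 2) ∧
      ∀ I : Finset (Fin M),
        (LinearIndependent ℂ (fun i : I => x i) ∧
          Submodule.span ℂ (x '' (I : Set (Fin M))) = ⊤) →
        ∀ c : ℝ,
          (∀ a : Fin M → ℂ,
            c * ∑ i ∈ I, ‖a i‖ ^ 2 ≤ ‖∑ i ∈ I, a i • x i‖ ^ 2) → c < ε := by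
  set n : ℕ := ⌈ε⁻¹⌉₊ + 1 with hn_def
  have hn : 0 < n := Nat.succ_pos _
  have hnR : (0:ℝ) < n := by exact_mod_cast hn
  refine ⟨n, n + 1, frameVec n, hn, Nat.succ_pos _, frameVec_norm n hn, ?_, ?_⟩
  · intro y
    have := frameVec_tight n hn y
    rw [this]
    norm_cast
  · rintro I ⟨hind, hspan⟩ c hc
    -- the subset has exactly n elements
    have hre : Set.range (fun i : I => frameVec n i)
        = frameVec n '' (I : Set (Fin (n+1))) := by
      ext v
      constructor
      · rintro ⟨⟨i, hi⟩, rfl⟩; exact ⟨i, by simpa using hi, rfl⟩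
      · rintro ⟨i, hi, rfl⟩; exact ⟨⟨i, by simpa using hi⟩, rfl⟩
    have hspan' : ⊤ ≤ Submodule.span ℂ (Set.range fun i : I => frameVec n i) := by
      rw [hre, hspan]
    have hb : Module.Basis I ℂ (EuclideanSpace ℂ (Fin n)) := Module.Basis.mk hind hspan'
    have hcard : I.card = n := by
      have h1 := Module.finrank_eq_card_basis hb
      rw [finrank_euclideanSpace_fin, Fintype.card_coe] at h1
      omega
    -- the complement is a singleton
    have hccard : Iᶜ.card = 1 := by
      have h := Finset.card_compl I
      rw [hcard, Fintype.card_fin] at h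
      omega
    obtain ⟨j, hj⟩ := Finset.card_eq_one.mp hccard
    have hsumI : ∑ i ∈ I, frameVec n i = - frameVec n j := by
      have h := Finset.sum_add_sum_compl I (frameVec n)
      rw [hj, Finset.sum_singleton, frameVec_sum n] at h
      exact eq_neg_of_add_eq_zero_left h
    have h1 := hc (fun _ => (1:ℂ))
    simp only [norm_one, one_pow, one_smul, Finset.sum_const, nsmul_eq_mul, mul_one,
      hcard] at h1
    rw [hsumI, norm_neg, frameVec_norm n hn j] at h1
    -- h1 : c * n ≤ 1 ^ 2
    have h1' : c * (n:ℝ) ≤ 1 := by simpa using h1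
    have hn' : ε⁻¹ < (n:ℝ) := by
      refine lt_of_le_of_lt (Nat.le_ceil ε⁻¹) ?_
      exact_mod_cast Nat.lt_succ_self ⌈ε⁻¹⌉₊
    have hεn : 1 < ε * n := by
      calc 1 = ε * ε⁻¹ := (mul_inv_cancel₀ (ne_of_gt hε)).symm
        _ < ε * n := (mul_lt_mul_iff_right₀ hε).mpr hn'
    have hcn : c * (n:ℝ) < ε * (n:ℝ) := lt_of_le_of_lt h1' (by linarith)
    exact lt_of_mul_lt_mul_right hcn (le_of_lt hnR)
  
theorem stmt14 :
    (∀ ε : ℝ, 0 < ε →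
      ∃ (n M : ℕ) (x : Fin M → EuclideanSpace ℂ (Fin n)),
        0 < n ∧ 0 < M ∧ (∀ i, ‖x i‖ = 1) ∧
        (∀ y : EuclideanSpace ℂ (Fin n),
          ∑ i, ‖⟪y, x i⟫_ℂ‖ ^ 2 = ((M : ℝ) / (n : ℝ)) * ‖y‖ ^ 2) ∧
        ∀ I : Finset (Fin M),
          (LinearIndependent ℂ (fun i : I => x i) ∧
            Submodule.span ℂ (x '' (I : Set (Fin M))) = ⊤) →
          ∀ c : ℝ,
            (∀ a : Fin M → ℂ,
              c * ∑ i ∈ I, ‖a i‖ ^ 2 ≤ ‖∑ i ∈ I, a i • x i‖ ^ 2) → c < ε) ∧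
    ¬ ∃ A : ℝ, 0 < A ∧
      ∀ (n M : ℕ) (x : Fin M → EuclideanSpace ℂ (Fin n)),
        0 < n → 0 < M → (∀ i, ‖x i‖ = 1) →
        (∀ y : EuclideanSpace ℂ (Fin n),
          ∑ i, ‖⟪y, x i⟫_ℂ‖ ^ 2 = ((M : ℝ) / (n : ℝ)) * ‖y‖ ^ 2) →
        ∃ I : Finset (Fin M),
          (LinearIndependent ℂ (fun i : I => x i) ∧
            Submodule.span ℂ (x '' (I : Set (Fin M))) = ⊤) ∧
          ∀ a : Fin M → ℂ,
            A * ∑ i ∈ I, ‖a i‖ ^ 2 ≤ ‖∑ i ∈ I, a i • x i‖ ^ 2 := by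
  refine ⟨fun ε hε => main_exists ε hε, ?_⟩
  rintro ⟨A, hA, hall⟩
  obtain ⟨n, M, x, hn, hM, hunit, htight, hsub⟩ := main_exists A hA
  obtain ⟨I, hI, hr⟩ := hall n M x hn hM hunit htight
  exact absurd (hsub I hI A hr) (lt_irrefl A)
end

section
/- Let Ψ: X → H be a measurable map on a measurable space (X,Σ) in which all singletons are measurable, and suppose there exist indices (t_j)_{j∈J} ∈ X^J such that (Ψ(t_j))_{j∈J} is a frame of H. Then there exists a positive σ-finite measure ν on (X,Σ) such that Ψ is a continuous frame of H with respect to ν and Ψ is bounded ν-almost everywhere. -/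
open scoped InnerProductSpace
open MeasureTheory

theorem stmt17 {X : Type*} [MeasurableSpace X]
    (hsing : ∀ t : X, MeasurableSet ({t} : Set X))
    {H : Type*} [NormedAddCommGroup H] [InnerProductSpace ℂ H] [CompleteSpace H]
    [TopologicalSpace.SeparableSpace H] [MeasurableSpace H] [BorelSpace H]
    (Ψ : X → H) (hmeas : Measurable Ψ)
    {J : Type*} [Countable J] (t : J → X) (A B : ℝ) (hA : 0 < A) (hB : 0 < B)
    (hframe : ∀ x : H,
      A * ‖x‖ ^ 2 ≤ ∑' j, ‖⟪x, Ψ (t j)⟫_ℂ‖ ^ 2 ∧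
      ∑' j, ‖⟪x, Ψ (t j)⟫_ℂ‖ ^ 2 ≤ B * ‖x‖ ^ 2) :
    ∃ ν : Measure X, SigmaFinite ν ∧
      (∃ A' B' : ℝ, 0 < A' ∧ 0 < B' ∧ ∀ x : H,
        A' * ‖x‖ ^ 2 ≤ ∫ s, ‖⟪x, Ψ s⟫_ℂ‖ ^ 2 ∂ν ∧
        (∫ s, ‖⟪x, Ψ s⟫_ℂ‖ ^ 2 ∂ν) ≤ B' * ‖x‖ ^ 2) ∧
      (∃ C : ℝ, 0 < C ∧ ∀ᵐ s ∂ν, ‖Ψ s‖ ≤ C) := by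
  haveI : MeasurableSingletonClass X := ⟨hsing⟩
  classical
  -- summability for every x
  have hnonneg : ∀ (x : H) (j : J), (0:ℝ) ≤ ‖⟪x, Ψ (t j)⟫_ℂ‖ ^ 2 := fun x j => by positivity
  have hsumm : ∀ x : H, Summable (fun j => ‖⟪x, Ψ (t j)⟫_ℂ‖ ^ 2) := by
    intro x
    by_cases hx : x = 0
    · simp only [hx, inner_zero_left, norm_zero]
      simpa using summable_zero
    · by_contra hns
      have h0 : (∑' j, ‖⟪x, Ψ (t j)⟫_ℂ‖ ^ 2) = 0 := tsum_eq_zero_of_not_summable hns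
      have h1 := (hframe x).1
      rw [h0] at h1
      have h2 : 0 < A * ‖x‖ ^ 2 := by
        have : 0 < ‖x‖ := norm_pos_iff.mpr hx
        positivity
      linarith
  -- finite multiplicity of points with nonzero Ψ
  have hmult : ∀ s : X, Ψ s ≠ 0 → {j : J | t j = s}.Finite := by
    intro s hs
    have hsum := hsumm (Ψ s)
    have hε : (0:ℝ) < ‖⟪Ψ s, Ψ s⟫_ℂ‖ ^ 2 := by
      have : ‖Ψ s‖ ≠ 0 := fun h => hs (norm_eq_zero.mp h)
      have h2 : ⟪Ψ s, Ψ s⟫_ℂ ≠ 0 := by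
        simp [inner_self_eq_zero, hs]
      exact pow_pos (norm_pos_iff.mpr h2) 2
    have hev : ∀ᶠ j in Filter.cofinite, ‖⟪Ψ s, Ψ (t j)⟫_ℂ‖ ^ 2 < ‖⟪Ψ s, Ψ s⟫_ℂ‖ ^ 2 :=
      hsum.tendsto_cofinite_zero.eventually (gt_mem_nhds hε)
    have hfin := Filter.eventually_cofinite.mp hev
    refine hfin.subset ?_
    intro j hj
    simp only [Set.mem_setOf_eq] at hj ⊢
    rw [hj]
    exact lt_irrefl _
  set J' : Set J := {j : J | Ψ (t j) ≠ 0} with hJ'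
  set ν : Measure X := Measure.sum (fun j : J' => Measure.dirac (t j.1)) with hν
  -- ν of a singleton is finite
  have hsingfin : ∀ s : X, ν {s} < ⊤ := by
    intro s
    rw [hν, Measure.sum_apply _ (hsing s)]
    have hsupfin : {j : J' | t j.1 = s}.Finite := by
      by_cases hs : Ψ s = 0
      · have : {j : J' | t j.1 = s} = ∅ := by
          ext j; simp only [Set.mem_setOf_eq, Set.mem_empty_iff_false, iff_false]
          intro h; exact j.2 (h ▸ hs)
        simp [this]
      · exact ((hmult s hs).preimage (Subtype.val_injective.injOn)).subset
          (fun j hj => hj)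
    calc (∑' (j : J'), Measure.dirac (t j.1) {s})
        = ∑ j ∈ hsupfin.toFinset, Measure.dirac (t j.1) {s} := by
          refine tsum_eq_sum ?_
          intro j hj
          simp only [Set.Finite.mem_toFinset, Set.mem_setOf_eq] at hj
          rw [Measure.dirac_apply]
          simp [hj]
      _ ≤ ∑ j ∈ hsupfin.toFinset, 1 := by
          refine Finset.sum_le_sum fun j _ => ?_
          rw [Measure.dirac_apply]
          exact Set.indicator_le_self _ _ _ |>.trans (le_refl _) |>.trans le_rfl
      _ < ⊤ := by simp [ENNReal.sum_lt_top]
  -- sigma finiteness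
  have hσ : SigmaFinite ν := by
    rcases isEmpty_or_nonempty J' with hJe | hJne
    · constructor
      refine ⟨⟨fun _ => Set.univ, fun _ => trivial, ?_, by simp [Set.iUnion_const]⟩⟩
      intro n
      rw [hν, Measure.sum_apply _ MeasurableSet.univ]
      simp [tsum_empty]
    · obtain ⟨e, he⟩ := exists_surjective_nat (↥J')
      constructor
      refine ⟨⟨fun n => (⋂ (j : J'), ({t j.1}ᶜ : Set X)) ∪ ⋃ i ∈ Finset.range n, {t (e i).1},
        fun _ => trivial, ?_, ?_⟩⟩
      · intro n
        refine lt_of_le_of_lt (measure_union_le _ _) ?_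
        have h1 : ν (⋂ (j : J'), ({t j.1}ᶜ : Set X)) = 0 := by
          rw [hν, Measure.sum_apply _ (MeasurableSet.iInter (fun j => (hsing _).compl))]
          refine ENNReal.summable.tsum_eq_zero_iff |>.mpr fun j => ?_
          rw [Measure.dirac_apply]
          simp only [Set.indicator_apply]
          rw [if_neg]
          intro h
          exact (Set.mem_iInter.mp h j) rfl
        rw [h1, zero_add]
        refine lt_of_le_of_lt (measure_biUnion_finset_le _ _) ?_
        exact ENNReal.sum_lt_top.mpr fun i _ => hsingfin _
      · refine Set.iUnion_eq_univ_iff.mpr fun s => ?_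
        by_cases hs : ∃ j : J', t j.1 = s
        · obtain ⟨j, hj⟩ := hs
          obtain ⟨i, hi⟩ := he j
          refine ⟨i + 1, Or.inr ?_⟩
          refine Set.mem_biUnion (Finset.mem_range.mpr (Nat.lt_succ_self i)) ?_
          simp [hi, hj]
        · exact ⟨0, Or.inl (Set.mem_iInter.mpr fun j h => hs ⟨j, (Set.mem_singleton_iff.mp h).symm⟩)⟩
  refine ⟨ν, hσ, ⟨A, B, hA, hB, ?_⟩, ⟨Real.sqrt B, Real.sqrt_pos.mpr hB, ?_⟩⟩
  · intro x
    set f : X → ℝ := fun s => ‖⟪x, Ψ s⟫_ℂ‖ ^ 2 with hf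
    have hfm : Measurable f := by
      have h1 : Measurable fun s => ⟪x, Ψ s⟫_ℂ :=
        (Continuous.measurable (continuous_const.inner continuous_id)).comp hmeas
      exact (h1.norm.pow_const 2)
    have hfnn : ∀ s, 0 ≤ f s := fun s => by positivity
    -- integrability
    have hlint : ∫⁻ s, ENNReal.ofReal (f s) ∂ν = ∑' (j : J'), ENNReal.ofReal (f (t j.1)) := by
      rw [hν, lintegral_sum_measure]
      exact tsum_congr fun j => lintegral_dirac _ _
    have hlint_lt : ∫⁻ s, ENNReal.ofReal (f s) ∂ν < ⊤ := by
      rw [hlint]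
      have h1 : (∑' (j : J'), ENNReal.ofReal (f (t j.1))) ≤
          ∑' (j : J), ENNReal.ofReal (f (t j)) :=
        ENNReal.tsum_comp_le_tsum_of_injective Subtype.val_injective
          (fun j => ENNReal.ofReal (f (t j)))
      have h2 : (∑' (j : J), ENNReal.ofReal (f (t j))) =
          ENNReal.ofReal (∑' j, f (t j)) :=
        (ENNReal.ofReal_tsum_of_nonneg (fun j => hfnn _) (hsumm x)).symm
      exact lt_of_le_of_lt (h1.trans h2.le) (ENNReal.ofReal_lt_top)
    have hInt : Integrable f ν := by
      refine ⟨hfm.aestronglyMeasurable, ?_⟩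
      rw [hasFiniteIntegral_iff_norm]
      have hn : ∀ s, ‖f s‖ = f s := fun s => Real.norm_of_nonneg (hfnn s)
      simp_rw [hn]
      exact hlint_lt
    have hval : ∫ s, f s ∂ν = ∑' j, f (t j) := by
      rw [hν, integral_sum_measure (hν ▸ hInt)]
      have h1 : ∀ j : J', ∫ s, f s ∂Measure.dirac (t j.1) = f (t j.1) :=
        fun j => integral_dirac f _
      rw [tsum_congr h1]
      have hsupp : Function.support (fun j : J => f (t j)) ⊆ J' := by
        intro j hj
        simp only [Function.mem_support] at hj
        by_contra h
        simp only [hJ', Set.mem_setOf_eq, not_not] at h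
        exact hj (by simp [hf, h])
      exact tsum_subtype_eq_of_support_subset hsupp
    rw [hval]
    exact hframe x
  · -- a.e. bound
    have hbd : ∀ j : J, ‖Ψ (t j)‖ ≤ Real.sqrt B := by
      intro j
      by_cases hz : Ψ (t j) = 0
      · simp [hz, Real.sqrt_nonneg]
      · set v := Ψ (t j) with hv
        have hterm : ‖⟪v, v⟫_ℂ‖ ^ 2 ≤ ∑' i, ‖⟪v, Ψ (t i)⟫_ℂ‖ ^ 2 :=
          Summable.le_tsum (hsumm v) j (fun i _ => hnonneg v i)
        have hB2 := (hframe v).2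
        have hvv : ‖⟪v, v⟫_ℂ‖ = ‖v‖ ^ 2 := by
          rw [inner_self_eq_norm_sq_to_K]
          simp
        have h4 : (‖v‖ ^ 2) ^ 2 ≤ B * ‖v‖ ^ 2 := by
          calc (‖v‖ ^ 2) ^ 2 = ‖⟪v, v⟫_ℂ‖ ^ 2 := by rw [hvv]
            _ ≤ ∑' i, ‖⟪v, Ψ (t i)⟫_ℂ‖ ^ 2 := hterm
            _ ≤ B * ‖v‖ ^ 2 := hB2
        have hvpos : 0 < ‖v‖ := norm_pos_iff.mpr hz
        have h5 : ‖v‖ ^ 2 ≤ B := by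
          have h6 : 0 < ‖v‖ ^ 2 := by positivity
          nlinarith
        calc ‖v‖ = Real.sqrt (‖v‖ ^ 2) := by rw [Real.sqrt_sq hvpos.le]
          _ ≤ Real.sqrt B := Real.sqrt_le_sqrt h5
    rw [hν, Measure.ae_sum_iff]
    intro j
    rw [ae_dirac_iff]
    · exact hbd j.1
    · exact measurableSet_le (hmeas.norm) measurable_const
end
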